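/- arXiv:1804.02811 — 2 statements merged into one kernel-verified Lean document; each statement's English description precedes it below -/
import Mathlib

section
/- Let d ≥ 1, let Ω ⊆ ℝ^d be open, let x ∈ Ω, and let Φ : Ω → ℝ^d be four times continuously differentiable with DΦ(x) invertible. Then, as t → 0⁺ and uniformly over unit vectors θ ∈ ℝ^d, (Φ(x+tθ) − Φ(x))ᵀ·(DΦ(x)·DΦ(x)ᵀ)⁻¹·(Φ(x+tθ) − Φ(x)) = t² + (θᵀ·DΦ(x)⁻¹·D²Φ(x)(θ,θ))·t³ + O(t⁴). -/
open Asymptotics Filter Topology Metric Matrix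

/-- The Jacobian matrix `DΦ(u)` of `Φ : ℝ^d → ℝ^d` at `u`. -/
noncomputable def jacobianMatrix {d : ℕ}
    (Φ : EuclideanSpace ℝ (Fin d) → EuclideanSpace ℝ (Fin d))
    (u : EuclideanSpace ℝ (Fin d)) : Matrix (Fin d) (Fin d) ℝ :=
  Matrix.of fun i j => fderiv ℝ Φ u (EuclideanSpace.single j 1) i

set_option maxHeartbeats 4000000

section Aux

open Set

variable {E F : Type*} [NormedAddCommGroup E] [NormedSpace ℝ E] [ProperSpace E]
  [NormedAddCommGroup F] [NormedSpace ℝ F]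

/-- Third-order Taylor bound with explicit constants, proved by two applications of the
mean value inequality on segments. -/
lemma one_sided_mahalanobis_aux_taylor2_bound {Φ : E → F} {Ω : Set E} (hΩ : IsOpen Ω)
    (hΦ : ContDiffOn ℝ 4 Φ Ω) {x : E} (hx : x ∈ Ω) :
    ∃ r > (0:ℝ), ∃ M > (0:ℝ), closedBall x r ⊆ Ω ∧ ∀ y ∈ Metric.closedBall x r,
      ‖Φ y - Φ x - fderiv ℝ Φ x (y - x)
        - (2⁻¹:ℝ) • fderiv ℝ (fderiv ℝ Φ) x (y - x) (y - x)‖ ≤ M * ‖y - x‖ ^ 3 := by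
  obtain ⟨ε, εpos, hball⟩ := Metric.isOpen_iff.1 hΩ x hx
  set r : ℝ := ε / 2 with hrdef
  have rpos : 0 < r := by positivity
  have hrΩ : Metric.closedBall x r ⊆ Ω := fun y hy =>
    hball (lt_of_le_of_lt (Metric.mem_closedBall.1 hy) (by rw [hrdef]; linarith))
  set D1 := fderiv ℝ Φ with hD1def
  set D2 := fderiv ℝ D1 with hD2def
  set D3 := fderiv ℝ D2 with hD3def
  have hD1c : ContDiffOn ℝ 3 D1 Ω := hΦ.fderiv_of_isOpen hΩ (by norm_num)
  have hD2c : ContDiffOn ℝ 2 D2 Ω := hD1c.fderiv_of_isOpen hΩ (by norm_num)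
  letI : NormedAddCommGroup (E →L[ℝ] E →L[ℝ] F) := inferInstance
  letI : NormedSpace ℝ (E →L[ℝ] E →L[ℝ] F) := inferInstance
  have hD3c : ContDiffOn ℝ 1 D3 Ω := hD2c.fderiv_of_isOpen hΩ (by norm_num)
  have hPhiD : ∀ y ∈ Ω, HasFDerivAt Φ (D1 y) y := fun y hy =>
    ((hΦ.contDiffAt (hΩ.mem_nhds hy)).differentiableAt (by norm_num)).hasFDerivAt
  have hD1D : ∀ y ∈ Ω, HasFDerivAt D1 (D2 y) y := fun y hy =>
    ((hD1c.contDiffAt (hΩ.mem_nhds hy)).differentiableAt (by norm_num)).hasFDerivAt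
  have hD2D : ∀ y ∈ Ω, HasFDerivAt D2 (D3 y) y := fun y hy =>
    ((hD2c.contDiffAt (hΩ.mem_nhds hy)).differentiableAt (by norm_num)).hasFDerivAt
  obtain ⟨M0, hM0⟩ := (isCompact_closedBall x r).exists_bound_of_continuousOn
    ((hD3c.continuousOn).mono hrΩ)
  set M : ℝ := max M0 1 with hMdef
  have Mpos : (0:ℝ) < M := lt_of_lt_of_le one_pos (le_max_right _ _)
  have hM : ∀ z ∈ Metric.closedBall x r, ‖D3 z‖ ≤ M := fun z hz =>
    (hM0 z hz).trans (le_max_left _ _)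
  have hsymm : ∀ v w : E, D2 x v w = D2 x w v := fun v w =>
    (hΦ.contDiffAt (hΩ.mem_nhds hx)).isSymmSndFDerivAt (by norm_num) v w
  -- first-order bound for `D2`
  have hA : ∀ z ∈ Metric.closedBall x r, ‖D2 z - D2 x‖ ≤ M * ‖z - x‖ := by
    intro z hz
    exact (convex_closedBall x r).norm_image_sub_le_of_norm_hasFDerivWithin_le
      (fun w hw => (hD2D w (hrΩ hw)).hasFDerivWithinAt)
      (fun w hw => hM w hw) (Metric.mem_closedBall_self rpos.le) hz
  -- second-order bound for `D1`
  have hB : ∀ z ∈ Metric.closedBall x r, ‖D1 z - D1 x - D2 x (z - x)‖ ≤ M * ‖z - x‖ ^ 2 := by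
    intro z hz
    have hseg : segment ℝ x z ⊆ Metric.closedBall x r :=
      (convex_closedBall x r).segment_subset (Metric.mem_closedBall_self rpos.le) hz
    have hsegn : ∀ w ∈ segment ℝ x z, ‖w - x‖ ≤ ‖z - x‖ := by
      intro w hw
      have := (convex_closedBall x (dist z x)).segment_subset
        (Metric.mem_closedBall_self dist_nonneg) (Metric.mem_closedBall.2 le_rfl) hw
      simpa [Metric.mem_closedBall, dist_eq_norm] using this
    have key := (convex_segment x z).norm_image_sub_le_of_norm_hasFDerivWithin_le
      (f := fun w => D1 w - D2 x (w - x)) (f' := fun w => D2 w - D2 x) (C := M * ‖z - x‖)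
      (fun w hw => by
        have h2 : HasFDerivAt (fun w : E => D2 x (w - x)) (D2 x) w := by
          simp only [map_sub]
          exact ((D2 x).hasFDerivAt).sub_const (D2 x x)
        exact ((hD1D w (hrΩ (hseg hw))).sub h2).hasFDerivWithinAt)
      (fun w hw => (hA w (hseg hw)).trans
        (by have := hsegn w hw; nlinarith [norm_nonneg (w - x)]))
      (left_mem_segment ℝ x z) (right_mem_segment ℝ x z)
    simp only [sub_self, map_zero, sub_zero] at key
    calc ‖D1 z - D1 x - D2 x (z - x)‖ = ‖D1 z - D2 x (z - x) - D1 x‖ := by rw [sub_right_comm]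
    _ ≤ M * ‖z - x‖ * ‖z - x‖ := key
    _ = M * ‖z - x‖ ^ 2 := by ring
  -- derivative of the quadratic term
  have hq : ∀ z : E, HasFDerivAt (fun w : E => D2 x (w - x) (w - x))
      (D2 x (z - x) + (D2 x).flip (z - x)) z := by
    intro z
    have hb := (D2 x).isBoundedBilinearMap
    have hδ : HasFDerivAt (fun w : E => (w - x, w - x))
        ((ContinuousLinearMap.id ℝ E).prod (ContinuousLinearMap.id ℝ E)) z := by
      have h1 : HasFDerivAt (fun w : E => w - x) (ContinuousLinearMap.id ℝ E) z :=
        (hasFDerivAt_id z).sub_const x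
      exact h1.prodMk h1
    have hcomp := (hb.hasFDerivAt (z - x, z - x)).comp z hδ
    refine HasFDerivAt.congr_fderiv hcomp ?_
    ext v
    simp [IsBoundedBilinearMap.deriv_apply]
  have hR : ∀ z ∈ Ω, HasFDerivAt
      (fun w : E => Φ w - D1 x (w - x) - (2⁻¹:ℝ) • D2 x (w - x) (w - x))
      (D1 z - D1 x - D2 x (z - x)) z := by
    intro z hz
    have h2 : HasFDerivAt (fun w : E => D1 x (w - x)) (D1 x) z := by
      simp only [map_sub]
      exact ((D1 x).hasFDerivAt).sub_const (D1 x x)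
    have h3 := ((hq z).const_smul (2⁻¹:ℝ))
    have hall := ((hPhiD z hz).sub h2).sub h3
    have hkey : (2⁻¹:ℝ) • (D2 x (z - x) + (D2 x).flip (z - x)) = (D2 x) (z - x) := by
      ext v
      simp only [ContinuousLinearMap.smul_apply, ContinuousLinearMap.add_apply,
        ContinuousLinearMap.flip_apply, hsymm v (z - x)]
      module
    refine HasFDerivAt.congr_fderiv hall ?_
    rw [hkey]
  refine ⟨r, rpos, M, Mpos, hrΩ, ?_⟩
  intro y hy
  have hseg : segment ℝ x y ⊆ Metric.closedBall x r :=
    (convex_closedBall x r).segment_subset (Metric.mem_closedBall_self rpos.le) hy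
  have hsegn : ∀ w ∈ segment ℝ x y, ‖w - x‖ ≤ ‖y - x‖ := by
    intro w hw
    have := (convex_closedBall x (dist y x)).segment_subset
      (Metric.mem_closedBall_self dist_nonneg) (Metric.mem_closedBall.2 le_rfl) hw
    simpa [Metric.mem_closedBall, dist_eq_norm] using this
  have key := (convex_segment x y).norm_image_sub_le_of_norm_hasFDerivWithin_le
    (f := fun w : E => Φ w - D1 x (w - x) - (2⁻¹:ℝ) • D2 x (w - x) (w - x))
    (f' := fun w => D1 w - D1 x - D2 x (w - x)) (C := M * ‖y - x‖ ^ 2)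
    (fun w hw => (hR w (hrΩ (hseg hw))).hasFDerivWithinAt)
    (fun w hw => (hB w (hseg hw)).trans (by
      have h1 := hsegn w hw
      have h2 : ‖w - x‖ ^ 2 ≤ ‖y - x‖ ^ 2 := by
        exact pow_le_pow_left₀ (norm_nonneg _) h1 2
      exact mul_le_mul_of_nonneg_left h2 Mpos.le))
    (left_mem_segment ℝ x y) (right_mem_segment ℝ x y)
  simp only [sub_self, map_zero, smul_zero, sub_zero] at key
  calc ‖Φ y - Φ x - D1 x (y - x) - (2⁻¹:ℝ) • D2 x (y - x) (y - x)‖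
      = ‖Φ y - D1 x (y - x) - (2⁻¹:ℝ) • D2 x (y - x) (y - x) - Φ x‖ := by
        congr 1; abel
    _ ≤ M * ‖y - x‖ ^ 2 * ‖y - x‖ := key
    _ = M * ‖y - x‖ ^ 3 := by ring

end Aux

/-- The Jacobian matrix acts on coordinates as the Fréchet derivative does. -/
lemma one_sided_mahalanobis_aux_jac_mulVec {d : ℕ}
    (Φ : EuclideanSpace ℝ (Fin d) → EuclideanSpace ℝ (Fin d))
    (x : EuclideanSpace ℝ (Fin d)) (u : EuclideanSpace ℝ (Fin d)) :
    (jacobianMatrix Φ x).mulVec (fun j => u j) = fun i => (fderiv ℝ Φ x u) i := by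
  funext i
  have hsum : ∀ (v : Fin d → EuclideanSpace ℝ (Fin d)) (k : Fin d),
      (∑ j, v j) k = ∑ j, v j k := by
    intro v k
    have := map_sum (EuclideanSpace.proj (𝕜 := ℝ) k) v Finset.univ
    exact this
  have hu : u = ∑ j, u j • EuclideanSpace.single j (1:ℝ) := by
    ext k
    rw [hsum]
    simp [EuclideanSpace.single_apply]
  calc (jacobianMatrix Φ x).mulVec (fun j => u j) i
      = ∑ j, u j * fderiv ℝ Φ x (EuclideanSpace.single j 1) i := by
        simp [Matrix.mulVec, dotProduct, jacobianMatrix, mul_comm]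
    _ = (fderiv ℝ Φ x u) i := by
        conv_rhs => rw [hu]
        rw [map_sum, hsum]
        simp [mul_comm]


/-- one-sided Mahalanobis-type expansion: as `t → 0⁺`, uniformly
over unit vectors `θ`,
`(Φ(x+tθ) − Φ(x))ᵀ(DΦ(x)DΦ(x)ᵀ)⁻¹(Φ(x+tθ) − Φ(x))
  = t² + (θᵀ DΦ(x)⁻¹ D²Φ(x)(θ,θ))·t³ + O(t⁴)`. -/
theorem one_sided_mahalanobis_expansion_flat
    (d : ℕ) (hd : 1 ≤ d) (Ω : Set (EuclideanSpace ℝ (Fin d))) (hΩ : IsOpen Ω)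
    (x : EuclideanSpace ℝ (Fin d)) (hx : x ∈ Ω)
    (Φ : EuclideanSpace ℝ (Fin d) → EuclideanSpace ℝ (Fin d))
    (hΦ : ContDiffOn ℝ 4 Φ Ω)
    (hJac : (jacobianMatrix Φ x).det ≠ 0) :
    ∃ C > (0 : ℝ), ∃ t₀ > (0 : ℝ), ∀ t ∈ Set.Ioo (0 : ℝ) t₀,
      ∀ θ : EuclideanSpace ℝ (Fin d), ‖θ‖ = 1 →
        |dotProduct (fun i => (Φ (x + t • θ) - Φ x) i)
            (((jacobianMatrix Φ x * (jacobianMatrix Φ x)ᵀ)⁻¹).mulVec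
              fun i => (Φ (x + t • θ) - Φ x) i)
          - (t ^ 2 +
              dotProduct (fun i => θ i)
                (((jacobianMatrix Φ x)⁻¹).mulVec
                  fun i => (iteratedFDeriv ℝ 2 Φ x ![θ, θ]) i) * t ^ 3)|
          ≤ C * t ^ 4 := by
  classical
  obtain ⟨r, rpos, M, Mpos, hrΩ, hTay⟩ := one_sided_mahalanobis_aux_taylor2_bound hΩ hΦ hx
  set J := jacobianMatrix Φ x with hJdef
  set N := J⁻¹ with hNdef
  set TL : EuclideanSpace ℝ (Fin d) →L[ℝ] EuclideanSpace ℝ (Fin d) :=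
    LinearMap.toContinuousLinearMap (Matrix.toEuclideanLin N) with hTLdef
  have hTLapp : ∀ c : EuclideanSpace ℝ (Fin d),
      (fun i => TL c i) = N.mulVec (fun i => c i) := by
    intro c
    funext i
    show (Matrix.toEuclideanLin N c) i = _
    rw [Matrix.toEuclideanLin_apply]
  have hNJ : N * J = 1 := Matrix.nonsing_inv_mul J (isUnit_iff_ne_zero.2 hJac)
  have hTLD1 : ∀ u : EuclideanSpace ℝ (Fin d), TL (fderiv ℝ Φ x u) = u := by
    intro u
    have h1 : (fun i => TL (fderiv ℝ Φ x u) i) = fun i => u i := by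
      rw [hTLapp, ← one_sided_mahalanobis_aux_jac_mulVec Φ x u, Matrix.mulVec_mulVec, hNJ,
        Matrix.one_mulVec]
    ext k
    exact congrFun h1 k
  set D2x := fderiv ℝ (fderiv ℝ Φ) x with hD2xdef
  set Ku : ℝ := ‖TL‖ * ‖D2x‖ with hKudef
  set Kc : ℝ := ‖TL‖ * M with hKcdef
  have hKu0 : 0 ≤ Ku := by positivity
  have hKc0 : 0 ≤ Kc := by positivity
  refine ⟨Ku^2 + Kc^2 + 2*Kc + 2*Ku*Kc + 1, by positivity, min r 1, by positivity, ?_⟩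
  intro t ht θ hθ
  obtain ⟨ht0, htlt⟩ := ht
  have ht1 : t ≤ 1 := le_trans htlt.le (min_le_right _ _)
  have htr : t ≤ r := le_trans htlt.le (min_le_left _ _)
  have hmem : x + t • θ ∈ Metric.closedBall x r := by
    rw [Metric.mem_closedBall, dist_eq_norm, add_sub_cancel_left, norm_smul, hθ,
      Real.norm_eq_abs, abs_of_pos ht0, mul_one]
    exact htr
  set v := Φ (x + t • θ) - Φ x with hv
  set uu := TL (D2x θ θ) with huudef
  -- Taylor remainder
  set ρ := v - t • (fderiv ℝ Φ x θ) - (t^2/2) • (D2x θ θ) with hρ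
  have hρn : ‖ρ‖ ≤ M * t^3 := by
    have hTay' := hTay (x + t • θ) hmem
    rw [add_sub_cancel_left] at hTay'
    have h1 : fderiv ℝ Φ x (t • θ) = t • fderiv ℝ Φ x θ := by
      rw [_root_.map_smul]
    have h2 : (2⁻¹:ℝ) • D2x (t • θ) (t • θ) = (t^2/2) • (D2x θ θ) := by
      rw [show D2x (t • θ) = t • D2x θ from _root_.map_smul D2x t θ,
        ContinuousLinearMap.smul_apply, _root_.map_smul, smul_smul, smul_smul]
      congr 1
      ring
    have hnorm : ‖t • θ‖ = t := by
      rw [norm_smul, hθ, Real.norm_eq_abs, abs_of_pos ht0, mul_one]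
    calc ‖ρ‖ = ‖Φ (x + t • θ) - Φ x - fderiv ℝ Φ x (t • θ)
        - (2⁻¹:ℝ) • D2x (t • θ) (t • θ)‖ := by rw [hρ, hv, h1, h2]
      _ ≤ M * ‖t • θ‖ ^ 3 := hTay'
      _ = M * t^3 := by rw [hnorm]
  -- decomposition of the transformed vector
  have hw : TL v = t • θ + (t^2/2) • uu + TL ρ := by
    have hdec : v = t • (fderiv ℝ Φ x θ) + (t^2/2) • (D2x θ θ) + ρ := by
      rw [hρ]; abel
    rw [hdec, map_add, map_add, _root_.map_smul, _root_.map_smul, hTLD1, huudef]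
  -- rewriting the quadratic form
  have hLHS : dotProduct (fun i => v i) (((J * Jᵀ)⁻¹).mulVec (fun i => v i))
      = ‖TL v‖^2 := by
    have hinv : (J * Jᵀ)⁻¹ = Nᵀ * N := by
      rw [Matrix.mul_inv_rev, ← Matrix.transpose_nonsing_inv, hNdef]
    rw [hinv, ← Matrix.mulVec_mulVec, dotProduct_mulVec, Matrix.vecMul_transpose,
      ← hTLapp, ← real_inner_self_eq_norm_sq]
    simp [dotProduct, PiLp.inner_apply, RCLike.inner_apply, conj_trivial]
    rw [EuclideanSpace.norm_eq, Real.sq_sqrt (by positivity)]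
    simp [sq, Real.norm_eq_abs]
  have hRHS : dotProduct (fun i => θ i)
      (N.mulVec (fun i => (iteratedFDeriv ℝ 2 Φ x ![θ, θ]) i)) = (inner ℝ θ uu : ℝ) := by
    have h2 : iteratedFDeriv ℝ 2 Φ x ![θ, θ] = D2x θ θ := by
      rw [iteratedFDeriv_two_apply]
      simp
      rfl
    rw [h2, ← hTLapp, ← huudef]
    simp [dotProduct, PiLp.inner_apply, RCLike.inner_apply, conj_trivial]
    exact Finset.sum_congr rfl fun i _ => mul_comm _ _
  rw [hLHS, hRHS]
  -- expansion of the squared norm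
  set a := t • θ with hadef
  set b := (t^2/2) • uu with hbdef
  set cc := TL ρ with hccdef
  have hθθ : (inner ℝ θ θ : ℝ) = 1 := by
    rw [real_inner_self_eq_norm_sq, hθ]; norm_num
  have expand : ‖TL v‖^2 = t^2 + (inner ℝ θ uu : ℝ) * t^3
      + (‖b‖^2 + ‖cc‖^2 + 2*(inner ℝ a cc : ℝ) + 2*(inner ℝ b cc : ℝ)) := by
    rw [hw]
    rw [← real_inner_self_eq_norm_sq (a + b + cc), ← real_inner_self_eq_norm_sq b,
      ← real_inner_self_eq_norm_sq cc]
    simp only [inner_add_left, inner_add_right, hadef, hbdef, real_inner_smul_left,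
      real_inner_smul_right]
    rw [real_inner_comm uu θ, real_inner_comm cc θ, real_inner_comm cc uu, hθθ]
    ring
  rw [expand]
  have heq : t ^ 2 + (inner ℝ θ uu : ℝ) * t ^ 3
      + (‖b‖^2 + ‖cc‖^2 + 2*(inner ℝ a cc : ℝ) + 2*(inner ℝ b cc : ℝ))
      - (t ^ 2 + (inner ℝ θ uu : ℝ) * t ^ 3)
      = ‖b‖^2 + ‖cc‖^2 + 2*(inner ℝ a cc : ℝ) + 2*(inner ℝ b cc : ℝ) := by ring
  rw [heq]
  -- bounds
  have huun : ‖uu‖ ≤ Ku := by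
    calc ‖uu‖ ≤ ‖TL‖ * ‖D2x θ θ‖ := TL.le_opNorm _
      _ ≤ ‖TL‖ * ‖D2x‖ := by
          have := (D2x).le_opNorm₂ θ θ
          rw [hθ] at this
          simp only [mul_one] at this
          exact mul_le_mul_of_nonneg_left this (norm_nonneg _)
  have hccn : ‖cc‖ ≤ Kc * t^3 := by
    calc ‖cc‖ ≤ ‖TL‖ * ‖ρ‖ := TL.le_opNorm _
      _ ≤ ‖TL‖ * (M * t^3) := mul_le_mul_of_nonneg_left hρn (norm_nonneg _)
      _ = Kc * t^3 := by rw [hKcdef]; ring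
  have han : ‖a‖ = t := by
    rw [hadef, norm_smul, hθ, Real.norm_eq_abs, abs_of_pos ht0, mul_one]
  have hbn : ‖b‖ ≤ t^2 * Ku := by
    rw [hbdef, norm_smul, Real.norm_eq_abs, abs_of_nonneg (by positivity : (0:ℝ) ≤ t^2/2)]
    nlinarith [huun, norm_nonneg uu, sq_nonneg t]
  have hac : |(inner ℝ a cc : ℝ)| ≤ t * (Kc * t^3) := by
    calc |(inner ℝ a cc : ℝ)| ≤ ‖a‖ * ‖cc‖ := abs_real_inner_le_norm a cc
      _ ≤ t * (Kc * t^3) := by rw [han]; exact mul_le_mul_of_nonneg_left hccn ht0.le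
  have hbc : |(inner ℝ b cc : ℝ)| ≤ (t^2 * Ku) * (Kc * t^3) := by
    calc |(inner ℝ b cc : ℝ)| ≤ ‖b‖ * ‖cc‖ := abs_real_inner_le_norm b cc
      _ ≤ (t^2 * Ku) * (Kc * t^3) := by
          apply mul_le_mul hbn hccn (norm_nonneg _) (by positivity)
  clear_value J N TL D2x v uu ρ a b cc Ku Kc
  have hb2 : ‖b‖^2 ≤ Ku^2 * t^4 := by nlinarith [norm_nonneg b, hbn, sq_nonneg t]
  have h6 : t^6 ≤ t^4 := pow_le_pow_of_le_one ht0.le ht1 (by norm_num)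
  have hc2 : ‖cc‖^2 ≤ Kc^2 * t^4 := by
    nlinarith [mul_self_le_mul_self (norm_nonneg cc) hccn, h6, sq_nonneg Kc, hKc0]
  calc |‖b‖^2 + ‖cc‖^2 + 2*(inner ℝ a cc : ℝ) + 2*(inner ℝ b cc : ℝ)|
      ≤ ‖b‖^2 + ‖cc‖^2 + 2*|(inner ℝ a cc : ℝ)| + 2*|(inner ℝ b cc : ℝ)| := by
        have h1 := abs_add_le (‖b‖^2 + ‖cc‖^2 + 2*(inner ℝ a cc : ℝ)) (2*(inner ℝ b cc : ℝ))
        have h2 := abs_add_le (‖b‖^2 + ‖cc‖^2) (2*(inner ℝ a cc : ℝ))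
        have h3 : |‖b‖^2 + ‖cc‖^2| = ‖b‖^2 + ‖cc‖^2 := abs_of_nonneg (by positivity)
        rw [abs_mul] at h1 h2
        simp only [abs_two] at h1 h2
        linarith
    _ ≤ (Ku^2 + Kc^2 + 2*Kc + 2*Ku*Kc + 1) * t^4 := by
        have h5 : t^5 ≤ t^4 := pow_le_pow_of_le_one ht0.le ht1 (by norm_num)
        nlinarith [hac, hbc, hb2, hc2, hKu0, hKc0, h5, mul_nonneg hKu0 hKc0,
          pow_nonneg ht0.le 4, pow_nonneg ht0.le 5]
end

section
/- Let 1 ≤ d < p, let φ : ℝ^d → ℝ^{p−d} be three times continuously differentiable on a neighborhood of 0 with φ(0) = 0 and Dφ(0) = 0, and let P : ℝ^d → ℝ be twice continuously differentiable on a neighborhood of 0. For u ∈ ℝ^d write v(u) := (u, φ(u)) ∈ ℝ^p, and for h > 0 small define C_h := ∫_{‖u‖ ≤ h} v(u)·v(u)ᵀ·P(u) du ∈ ℝ^{p×p}. Then, as h → 0⁺, C_h = (|S^{d-1}|·P(0)/(d(d+2)))·h^{d+2}·J + O(h^{d+4}), where J ∈ ℝ^{p×p} is the diagonal matrix whose first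 d diagonal entries are 1 and whose remaining p−d diagonal entries are 0; in particular, the top-left d×d block of C_h is (|S^{d-1}|·P(0)/(d(d+2)))·h^{d+2}·I_{d×d} + O(h^{d+4}), while the off-diagonal d×(p−d) block and the bottom-right (p−d)×(p−d) block are both O(h^{d+4}). -/
open Asymptotics Filter Topology MeasureTheory Metric

/-- The surface measure `|S^{d-1}|` of the unit sphere in `ℝ^d`. -/
noncomputable def sphereArea (d : ℕ) : ℝ :=
  (((volume : Measure (EuclideanSpace ℝ (Fin d))).toSphere) Set.univ).toReal

section Aux

lemma taylor1_bound {E F : Type*} [NormedAddCommGroup E] [NormedSpace ℝ E] [FiniteDimensional ℝ E]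
    [NormedAddCommGroup F] [NormedSpace ℝ F]
    {f : E → F} {U : Set E} (hU : U ∈ 𝓝 (0:E)) (hf : ContDiffOn ℝ 2 f U) :
    ∃ r > 0, ∃ C ≥ (0:ℝ), closedBall (0:E) r ⊆ interior U ∧
      ∀ u ∈ closedBall (0:E) r, ‖f u - f 0 - fderiv ℝ f 0 u‖ ≤ C * ‖u‖^2 := by
  have hUo : interior U ∈ 𝓝 (0:E) := interior_mem_nhds.2 hU
  obtain ⟨r, hr, hball⟩ := Metric.nhds_basis_closedBall.mem_iff.1 hUo
  have hop : IsOpen (interior U) := isOpen_interior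
  set g := fderiv ℝ f with hg_def
  have hf2 : ContDiffOn ℝ 2 f (interior U) := hf.mono interior_subset
  have hg : ContDiffOn ℝ 1 g (interior U) := hf2.fderiv_of_isOpen hop (by norm_num)
  have hg' : ContinuousOn (fderiv ℝ g) (interior U) :=
    hg.continuousOn_fderiv_of_isOpen hop le_rfl
  obtain ⟨M, hM⟩ := (isCompact_closedBall (0:E) r).exists_bound_of_continuousOn
    (f := fderiv ℝ g) (hg'.mono hball)
  have hM0 : 0 ≤ M := le_trans (norm_nonneg _) (hM 0 (mem_closedBall_self hr.le))
  have hdg : ∀ x ∈ closedBall (0:E) r, DifferentiableAt ℝ g x := fun x hx =>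
    ((hg.differentiableOn one_ne_zero).differentiableAt (hop.mem_nhds (hball hx)))
  have key : ∀ v ∈ closedBall (0:E) r, ‖g v - g 0‖ ≤ M * ‖v‖ := by
    intro v hv
    have := (convex_closedBall (0:E) r).norm_image_sub_le_of_norm_fderiv_le hdg hM
      (mem_closedBall_self hr.le) hv
    simpa using this
  refine ⟨r, hr, M, hM0, hball, fun u hu => ?_⟩
  have hus : closedBall (0:E) ‖u‖ ⊆ closedBall (0:E) r :=
    closedBall_subset_closedBall (by simpa using hu)
  have hder : ∀ x ∈ closedBall (0:E) ‖u‖,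
      HasFDerivWithinAt (fun y => f y - f 0 - g 0 y) (g x - g 0) (closedBall (0:E) ‖u‖) x := by
    intro x hx
    have hfx : HasFDerivAt f (g x) x :=
      ((hf2.differentiableOn (by norm_num)).differentiableAt
        (hop.mem_nhds (hball (hus hx)))).hasFDerivAt
    exact (((hfx.sub_const (f 0)).sub ((g 0).hasFDerivAt))).hasFDerivWithinAt
  have hbd : ∀ x ∈ closedBall (0:E) ‖u‖, ‖g x - g 0‖ ≤ M * ‖u‖ := by
    intro x hx
    refine le_trans (key x (hus hx)) (mul_le_mul_of_nonneg_left ?_ hM0)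
    simpa using hx
  have := (convex_closedBall (0:E) ‖u‖).norm_image_sub_le_of_norm_hasFDerivWithin_le hder hbd
    (mem_closedBall_self (norm_nonneg u)) (mem_closedBall_zero_iff.2 le_rfl)
  simpa [map_zero, sub_zero, pow_two, mul_assoc] using this

lemma odd_cubic_bound {E F : Type*} [NormedAddCommGroup E] [NormedSpace ℝ E] [FiniteDimensional ℝ E]
    [NormedAddCommGroup F] [NormedSpace ℝ F]
    {φ : E → F} {U : Set E} (hU : U ∈ 𝓝 (0:E)) (hφ : ContDiffOn ℝ 3 φ U)
    (hDφ0 : fderiv ℝ φ 0 = 0) :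
    ∃ r > 0, ∃ C ≥ (0:ℝ), ∀ u ∈ closedBall (0:E) r, ‖φ u - φ (-u)‖ ≤ C * ‖u‖^3 := by
  have hUo : interior U ∈ 𝓝 (0:E) := interior_mem_nhds.2 hU
  have hop : IsOpen (interior U) := isOpen_interior
  set g := fderiv ℝ φ with hg_def
  have hφ3 : ContDiffOn ℝ 3 φ (interior U) := hφ.mono interior_subset
  have hg : ContDiffOn ℝ 2 g (interior U) := hφ3.fderiv_of_isOpen hop (by norm_num)
  obtain ⟨r, hr, C, hC0, hball, key⟩ := taylor1_bound hUo hg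
  set B := fderiv ℝ g 0 with hB_def
  have key' : ∀ v ∈ closedBall (0:E) r, ‖g v - B v‖ ≤ C * ‖v‖^2 := by
    intro v hv
    have := key v hv
    rwa [hDφ0, sub_zero] at this
  refine ⟨r, hr, 2*C, by linarith, fun u hu => ?_⟩
  have hus : closedBall (0:E) ‖u‖ ⊆ closedBall (0:E) r :=
    closedBall_subset_closedBall (by simpa using hu)
  have hneg : ∀ x ∈ closedBall (0:E) r, -x ∈ closedBall (0:E) r := by
    intro x hx; simpa [mem_closedBall_zero_iff] using hx
  have hdiff : ∀ x ∈ closedBall (0:E) r, HasFDerivAt φ (g x) x := by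
    intro x hx
    exact ((hφ3.differentiableOn (by norm_num)).differentiableAt
      (hop.mem_nhds (interior_subset (hball hx)))).hasFDerivAt
  have hder : ∀ x ∈ closedBall (0:E) ‖u‖,
      HasFDerivWithinAt (fun y => φ y - φ (-y)) (g x + g (-x)) (closedBall (0:E) ‖u‖) x := by
    intro x hx
    have h1 : HasFDerivAt φ (g x) x := hdiff x (hus hx)
    have h2 : HasFDerivAt (fun y : E => φ (-y)) ((g (-x)).comp (-(ContinuousLinearMap.id ℝ E))) x :=
      (hdiff (-x) (hneg x (hus hx))).comp x ((hasFDerivAt_id x).neg)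
    have h3 : HasFDerivAt (fun y : E => φ y - φ (-y))
        (g x - (g (-x)).comp (-(ContinuousLinearMap.id ℝ E))) x := h1.sub h2
    have heq : g x - (g (-x)).comp (-(ContinuousLinearMap.id ℝ E)) = g x + g (-x) := by
      ext v
      simp [sub_eq_add_neg]
    rw [heq] at h3
    exact h3.hasFDerivWithinAt
  have hbd : ∀ x ∈ closedBall (0:E) ‖u‖, ‖g x + g (-x)‖ ≤ 2*C * ‖u‖^2 := by
    intro x hx
    have hx' : x ∈ closedBall (0:E) r := hus hx
    have hxn : ‖x‖ ≤ ‖u‖ := by simpa using hx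
    have e1 := key' x hx'
    have e2 := key' (-x) (hneg x hx')
    rw [map_neg] at e2
    have : g x + g (-x) = (g x - B x) + (g (-x) - -(B x)) := by abel
    rw [this]
    calc ‖(g x - B x) + (g (-x) - -(B x))‖ ≤ ‖g x - B x‖ + ‖g (-x) - -(B x)‖ := norm_add_le _ _
      _ ≤ C * ‖x‖^2 + C * ‖-x‖^2 := by
          refine add_le_add e1 ?_
          simpa [sub_neg_eq_add, norm_neg] using e2
      _ ≤ 2*C*‖u‖^2 := by
          rw [norm_neg]
          have h2 : ‖x‖^2 ≤ ‖u‖^2 := pow_le_pow_left₀ (norm_nonneg x) hxn 2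
          nlinarith
  have hmvt := (convex_closedBall (0:E) ‖u‖).norm_image_sub_le_of_norm_hasFDerivWithin_le hder hbd
    (mem_closedBall_self (norm_nonneg u)) (mem_closedBall_zero_iff.2 le_rfl)
  rw [neg_zero, sub_self, sub_zero, sub_zero] at hmvt
  calc ‖φ u - φ (-u)‖ ≤ 2*C*‖u‖^2*‖u‖ := hmvt
    _ = 2*C*‖u‖^3 := by ring

variable {d : ℕ}

lemma setIntegral_ball_comp_isometry
    (e : (EuclideanSpace ℝ (Fin d)) ≃ₗᵢ[ℝ] (EuclideanSpace ℝ (Fin d)))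
    (f : (EuclideanSpace ℝ (Fin d)) → ℝ) (h : ℝ) :
    ∫ u in closedBall (0:EuclideanSpace ℝ (Fin d)) h, f (e u)
      = ∫ u in closedBall (0:EuclideanSpace ℝ (Fin d)) h, f u := by
  have h1 := e.measurePreserving.setIntegral_preimage_emb
    e.toHomeomorph.measurableEmbedding f (closedBall (0:EuclideanSpace ℝ (Fin d)) h)
  have h2 : (⇑e) ⁻¹' (closedBall (0:EuclideanSpace ℝ (Fin d)) h)
      = closedBall (0:EuclideanSpace ℝ (Fin d)) h := by
    have := e.isometry.preimage_closedBall (0:EuclideanSpace ℝ (Fin d)) h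
    rwa [map_zero] at this
  rwa [h2] at h1

lemma setIntegral_ball_neg (f : (EuclideanSpace ℝ (Fin d)) → ℝ) (h : ℝ) :
    ∫ u in closedBall (0:EuclideanSpace ℝ (Fin d)) h, f (-u)
      = ∫ u in closedBall (0:EuclideanSpace ℝ (Fin d)) h, f u :=
  setIntegral_ball_comp_isometry (LinearIsometryEquiv.neg ℝ) f h

lemma coord_abs_le_norm (u : EuclideanSpace ℝ (Fin d)) (i : Fin d) : |u i| ≤ ‖u‖ := by
  rw [EuclideanSpace.norm_eq]
  rw [show |u i| = Real.sqrt (‖u i‖^2) by rw [Real.sqrt_sq (norm_nonneg _), Real.norm_eq_abs]]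
  exact Real.sqrt_le_sqrt (Finset.single_le_sum (f := fun k => ‖u k‖ ^ 2)
    (fun k _ => sq_nonneg _) (Finset.mem_univ i))

lemma moment_offdiag (i j : Fin d) (hij : i ≠ j) (h : ℝ) :
    ∫ u in closedBall (0:EuclideanSpace ℝ (Fin d)) h, u i * u j = 0 := by
  classical
  set e : (EuclideanSpace ℝ (Fin d)) ≃ₗᵢ[ℝ] (EuclideanSpace ℝ (Fin d)) :=
    LinearIsometryEquiv.piLpCongrRight 2
      (fun k => if k = i then LinearIsometryEquiv.neg ℝ else LinearIsometryEquiv.refl ℝ ℝ)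
      with he_def
  have he : ∀ (u : EuclideanSpace ℝ (Fin d)) (k : Fin d),
      e u k = if k = i then -(u k) else u k := by
    intro u k
    by_cases hk : k = i
    · subst hk; simp [he_def]
    · simp [he_def, hk]
  have hFe : ∀ u : EuclideanSpace ℝ (Fin d), (e u) i * (e u) j = -(u i * u j) := by
    intro u
    rw [he u i, he u j, if_pos rfl, if_neg (fun hc : j = i => hij hc.symm)]
    ring
  have key := setIntegral_ball_comp_isometry e (fun u => u i * u j) h
  simp only [hFe, integral_neg] at key
  linarith

lemma moment_diag_eq (i j : Fin d) (h : ℝ) :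
    ∫ u in closedBall (0:EuclideanSpace ℝ (Fin d)) h, (u i)^2
      = ∫ u in closedBall (0:EuclideanSpace ℝ (Fin d)) h, (u j)^2 := by
  classical
  set e : (EuclideanSpace ℝ (Fin d)) ≃ₗᵢ[ℝ] (EuclideanSpace ℝ (Fin d)) :=
    LinearIsometryEquiv.piLpCongrLeft 2 ℝ ℝ (Equiv.swap i j) with he_def
  have he : ∀ (u : EuclideanSpace ℝ (Fin d)), e u i = u j := by
    intro u
    simp only [he_def, LinearIsometryEquiv.piLpCongrLeft_apply, Equiv.piCongrLeft'_apply,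
      Equiv.symm_swap]
    rw [Equiv.swap_apply_left]
  have key := setIntegral_ball_comp_isometry e (fun u => (u i)^2) h
  simp only [he] at key
  exact key.symm

lemma integral_norm_sq_ball (hd : 1 ≤ d) {h : ℝ} (hh : 0 ≤ h) :
    ∫ u in closedBall (0:EuclideanSpace ℝ (Fin d)) h, ‖u‖^2
      = sphereArea d * h^(d+2) / (d+2) := by
  classical
  haveI : Nontrivial (EuclideanSpace ℝ (Fin d)) := by
    have : Module.finrank ℝ (EuclideanSpace ℝ (Fin d)) = d := finrank_euclideanSpace_fin
    exact Module.nontrivial_of_finrank_pos (R := ℝ) (by omega)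
  have hfin : Module.finrank ℝ (EuclideanSpace ℝ (Fin d)) = d := finrank_euclideanSpace_fin
  set f : ℝ → ℝ := fun y => if y ≤ h then y^2 else 0 with hf_def
  have h1 : (fun x : EuclideanSpace ℝ (Fin d) => f ‖x‖)
      = Set.indicator (closedBall (0:EuclideanSpace ℝ (Fin d)) h) (fun x => ‖x‖^2) := by
    funext x
    rw [Set.indicator_apply]
    simp only [hf_def, mem_closedBall_zero_iff]
  have h2 := MeasureTheory.integral_fun_norm_addHaar
    (volume : Measure (EuclideanSpace ℝ (Fin d))) f
  rw [show (fun x : EuclideanSpace ℝ (Fin d) => f ‖x‖) = _ from h1] at h2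
  rw [integral_indicator (measurableSet_closedBall)] at h2
  have h3 : (fun y : ℝ => y ^ (Module.finrank ℝ (EuclideanSpace ℝ (Fin d)) - 1) • f y)
      = fun y => Set.indicator (Set.Iic h) (fun y => y^(d+1)) y := by
    funext y
    simp only [smul_eq_mul, hf_def, Set.indicator_apply, Set.mem_Iic, hfin]
    by_cases hy : y ≤ h
    · rw [if_pos hy, if_pos hy, ← pow_add]
      congr 1
      omega
    · rw [if_neg hy, if_neg hy, mul_zero]
  rw [show (∫ y in Set.Ioi (0:ℝ), y ^ (Module.finrank ℝ (EuclideanSpace ℝ (Fin d)) - 1) • f y)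
      = ∫ y in Set.Ioi (0:ℝ), Set.indicator (Set.Iic h) (fun y => y^(d+1)) y from by rw [h3]]
    at h2
  rw [setIntegral_indicator measurableSet_Iic, Set.Ioi_inter_Iic] at h2
  have h4 : (∫ y in Set.Ioc (0:ℝ) h, y^(d+1)) = h^(d+2) / (d+2) := by
    rw [← intervalIntegral.integral_of_le hh]
    rw [integral_pow]
    have : (0:ℝ)^(d+1+1) = 0 := zero_pow (by omega)
    rw [this]
    push_cast
    ring_nf
  rw [h4, hfin] at h2
  have h5 : sphereArea d
      = d * ((volume : Measure (EuclideanSpace ℝ (Fin d))) (ball 0 1)).toReal := by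
    rw [sphereArea, Measure.toSphere_apply_univ, hfin, ENNReal.toReal_mul]
    simp
  rw [h2, h5, nsmul_eq_mul, smul_eq_mul, measureReal_def]
  ring

lemma continuous_coord (i : Fin d) :
    Continuous (fun u : EuclideanSpace ℝ (Fin d) => u i) :=
  (EuclideanSpace.proj i).continuous

lemma moment_diag (hd : 1 ≤ d) (i : Fin d) {h : ℝ} (hh : 0 ≤ h) :
    ∫ u in closedBall (0:EuclideanSpace ℝ (Fin d)) h, (u i)^2
      = sphereArea d / (d*(d+2)) * h^(d+2) := by
  have hint : ∀ k : Fin d, IntegrableOn (fun u : EuclideanSpace ℝ (Fin d) => (u k)^2)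
      (closedBall (0:EuclideanSpace ℝ (Fin d)) h) volume :=
    fun k => (((continuous_coord k).pow 2).continuousOn).integrableOn_compact
      (isCompact_closedBall _ _)
  have hsum : ∑ k : Fin d, ∫ u in closedBall (0:EuclideanSpace ℝ (Fin d)) h, (u k)^2
      = ∫ u in closedBall (0:EuclideanSpace ℝ (Fin d)) h, ‖u‖^2 := by
    rw [← integral_finset_sum _ (fun k _ => hint k)]
    apply setIntegral_congr_fun measurableSet_closedBall
    intro u _
    show (∑ k : Fin d, (u k)^2) = ‖u‖^2
    rw [EuclideanSpace.norm_eq, Real.sq_sqrt (Finset.sum_nonneg fun k _ => sq_nonneg _)]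
    exact Finset.sum_congr rfl fun k _ => by rw [Real.norm_eq_abs, sq_abs]
  have hall : ∀ k : Fin d, (∫ u in closedBall (0:EuclideanSpace ℝ (Fin d)) h, (u k)^2)
      = ∫ u in closedBall (0:EuclideanSpace ℝ (Fin d)) h, (u i)^2 :=
    fun k => moment_diag_eq k i h
  rw [Finset.sum_congr rfl (fun k _ => hall k), Finset.sum_const, Finset.card_univ,
    Fintype.card_fin, integral_norm_sq_ball hd hh] at hsum
  have hd0 : (d:ℝ) ≠ 0 := Nat.cast_ne_zero.2 (by omega)
  have hd2 : (d:ℝ) + 2 ≠ 0 := by positivity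
  rw [nsmul_eq_mul] at hsum
  field_simp
  field_simp at hsum
  linarith

lemma moment (hd : 1 ≤ d) (i j : Fin d) {h : ℝ} (hh : 0 ≤ h) :
    ∫ u in closedBall (0:EuclideanSpace ℝ (Fin d)) h, u i * u j
      = (if i = j then sphereArea d / (d*(d+2)) * h^(d+2) else 0) := by
  by_cases hij : i = j
  · subst hij
    rw [if_pos rfl, ← moment_diag hd i hh]
    simp_rw [← pow_two]
  · rw [if_neg hij]
    exact moment_offdiag i j hij h

lemma integral_bigO_of_quartic_bound {G : (EuclideanSpace ℝ (Fin d)) → ℝ} {r C : ℝ}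
    (hr : 0 < r) (hC : 0 ≤ C)
    (hG : IntegrableOn G (closedBall (0:EuclideanSpace ℝ (Fin d)) r))
    (hbound : ∀ u ∈ closedBall (0:EuclideanSpace ℝ (Fin d)) r, |G u| ≤ C * ‖u‖^4) :
    (fun h : ℝ => ∫ u in closedBall (0:EuclideanSpace ℝ (Fin d)) h, G u)
      =O[𝓝[>] (0:ℝ)] fun h => h^(d+4) := by
  rw [Asymptotics.isBigO_iff]
  refine ⟨C * ((volume : Measure (EuclideanSpace ℝ (Fin d))) (ball 0 1)).toReal, ?_⟩
  filter_upwards [Ioc_mem_nhdsGT_of_mem (Set.left_mem_Ico.2 hr)] with h hh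
  obtain ⟨h0, hhr⟩ := hh
  have hsub : closedBall (0:EuclideanSpace ℝ (Fin d)) h ⊆ closedBall 0 r :=
    closedBall_subset_closedBall hhr
  have hint : IntegrableOn G (closedBall (0:EuclideanSpace ℝ (Fin d)) h) := hG.mono_set hsub
  have hb2 : ∀ u ∈ closedBall (0:EuclideanSpace ℝ (Fin d)) h, |G u| ≤ C * h^4 := by
    intro u hu
    refine (hbound u (hsub hu)).trans ?_
    exact mul_le_mul_of_nonneg_left
      (pow_le_pow_left₀ (norm_nonneg _) (mem_closedBall_zero_iff.1 hu) 4) hC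
  have hvol : ((volume : Measure (EuclideanSpace ℝ (Fin d)))
        (closedBall (0:EuclideanSpace ℝ (Fin d)) h)).toReal
      = h^d * ((volume : Measure (EuclideanSpace ℝ (Fin d))) (ball 0 1)).toReal := by
    rw [Measure.addHaar_closedBall _ _ h0.le, ENNReal.toReal_mul,
      ENNReal.toReal_ofReal (by positivity), finrank_euclideanSpace_fin]
  calc ‖∫ u in closedBall (0:EuclideanSpace ℝ (Fin d)) h, G u‖
      ≤ ∫ u in closedBall (0:EuclideanSpace ℝ (Fin d)) h, |G u| := by
        rw [Real.norm_eq_abs]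
        exact norm_integral_le_integral_norm G
    _ ≤ ∫ _u in closedBall (0:EuclideanSpace ℝ (Fin d)) h, C * h^4 := by
        refine setIntegral_mono_on hint.abs ?_ measurableSet_closedBall hb2
        exact integrableOn_const measure_closedBall_lt_top.ne
    _ = C * h^4 * ((volume : Measure (EuclideanSpace ℝ (Fin d)))
          (closedBall (0:EuclideanSpace ℝ (Fin d)) h)).toReal := by
        rw [setIntegral_const, smul_eq_mul, measureReal_def]
        ring
    _ ≤ C * ((volume : Measure (EuclideanSpace ℝ (Fin d))) (ball 0 1)).toReal * ‖h^(d+4)‖ := by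
        rw [hvol, Real.norm_eq_abs, abs_of_nonneg (by positivity), pow_add]
        ring_nf
        exact le_refl _

end Aux

set_option maxHeartbeats 1000000 in
/-- graph-parametrized local covariance matrix.  For a `d`-dim
graph `u ↦ (u, φ(u)) ∈ ℝ^p` (`p = d + (p−d)`, tangent at the origin equal to
`ℝ^d × {0}`), with density `P`, the local covariance matrix
`C_h = ∫_{‖u‖≤h} v(u)v(u)ᵀ P(u) du` satisfies, as `h → 0⁺` and entrywise,
`C_h = (|S^{d-1}|·P(0)/(d(d+2)))·h^{d+2}·J + O(h^{d+4})`, where `J` is the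
diagonal matrix with `1` on the first `d` diagonal entries and `0` on the
remaining `p−d` ones. -/
theorem graph_local_covariance_matrix_expansion
    (d p : ℕ) (hd : 1 ≤ d) (hdp : d < p)
    (φ : EuclideanSpace ℝ (Fin d) → EuclideanSpace ℝ (Fin (p - d)))
    (U : Set (EuclideanSpace ℝ (Fin d))) (hU : U ∈ 𝓝 (0 : EuclideanSpace ℝ (Fin d)))
    (hφ : ContDiffOn ℝ 3 φ U) (hφ0 : φ 0 = 0) (hDφ0 : fderiv ℝ φ 0 = 0)
    (P : EuclideanSpace ℝ (Fin d) → ℝ)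
    (V : Set (EuclideanSpace ℝ (Fin d))) (hV : V ∈ 𝓝 (0 : EuclideanSpace ℝ (Fin d)))
    (hP : ContDiffOn ℝ 2 P V) :
    ∀ a b : Fin d ⊕ Fin (p - d),
      (fun h : ℝ =>
          (∫ u in closedBall (0 : EuclideanSpace ℝ (Fin d)) h,
              Sum.elim (fun i => u i) (fun j => φ u j) a *
                Sum.elim (fun i => u i) (fun j => φ u j) b * P u)
            - sphereArea d * P 0 / (d * (d + 2)) * h ^ (d + 2) *
                Matrix.diagonal (Sum.elim (fun _ => (1 : ℝ)) fun _ => 0) a b)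
        =O[𝓝[>] (0 : ℝ)] fun h => h ^ (d + 4) := by
  classical
  obtain ⟨r₁, hr₁, C₁, hC₁0, hball₁, hφq0⟩ := taylor1_bound hU (hφ.of_le (by norm_num))
  obtain ⟨r₂, hr₂, C₂, hC₂0, hball₂, hPq⟩ := taylor1_bound hV hP
  obtain ⟨r₃, hr₃, C₃, hC₃0, hφodd⟩ := odd_cubic_bound hU hφ hDφ0
  set L : EuclideanSpace ℝ (Fin d) →L[ℝ] ℝ := fderiv ℝ P 0 with hL
  set r := min (min r₁ r₂) r₃ with hr_def
  have hr : 0 < r := lt_min (lt_min hr₁ hr₂) hr₃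
  have hrr₁ : r ≤ r₁ := le_trans (min_le_left _ _) (min_le_left _ _)
  have hrr₂ : r ≤ r₂ := le_trans (min_le_left _ _) (min_le_right _ _)
  have hrr₃ : r ≤ r₃ := min_le_right _ _
  have hsub₁ : closedBall (0:EuclideanSpace ℝ (Fin d)) r ⊆ closedBall 0 r₁ :=
    closedBall_subset_closedBall hrr₁
  have hsub₂ : closedBall (0:EuclideanSpace ℝ (Fin d)) r ⊆ closedBall 0 r₂ :=
    closedBall_subset_closedBall hrr₂
  have hsub₃ : closedBall (0:EuclideanSpace ℝ (Fin d)) r ⊆ closedBall 0 r₃ :=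
    closedBall_subset_closedBall hrr₃
  have hrU : closedBall (0:EuclideanSpace ℝ (Fin d)) r ⊆ U :=
    fun x hx => interior_subset (hball₁ (hsub₁ hx))
  have hrV : closedBall (0:EuclideanSpace ℝ (Fin d)) r ⊆ V :=
    fun x hx => interior_subset (hball₂ (hsub₂ hx))
  have hnegmem : ∀ {u : EuclideanSpace ℝ (Fin d)},
      u ∈ closedBall (0:EuclideanSpace ℝ (Fin d)) r
        → -u ∈ closedBall (0:EuclideanSpace ℝ (Fin d)) r := by
    intro u hu; simpa [mem_closedBall_zero_iff] using hu
  -- quadratic bound on φ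
  have hφq : ∀ u ∈ closedBall (0:EuclideanSpace ℝ (Fin d)) r₁, ‖φ u‖ ≤ C₁ * ‖u‖^2 := by
    intro u hu
    have := hφq0 u hu
    rwa [hφ0, hDφ0, sub_zero, ContinuousLinearMap.zero_apply, sub_zero] at this
  -- bound on P
  set MP := |P 0| + ‖L‖ * r + C₂ * r^2 with hMP
  have hMP0 : 0 ≤ MP := by positivity
  have hPbd : ∀ u ∈ closedBall (0:EuclideanSpace ℝ (Fin d)) r, |P u| ≤ MP := by
    intro u hu
    have h1 := hPq u (hsub₂ hu)
    rw [Real.norm_eq_abs] at h1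
    have hl := L.le_opNorm u
    rw [Real.norm_eq_abs] at hl
    have hur : ‖u‖ ≤ r := mem_closedBall_zero_iff.1 hu
    have hx := abs_le.1 h1
    have hlx := abs_le.1 hl
    have hq : C₂ * ‖u‖^2 ≤ C₂ * r^2 :=
      mul_le_mul_of_nonneg_left (pow_le_pow_left₀ (norm_nonneg u) hur 2) hC₂0
    have hlr : ‖L‖ * ‖u‖ ≤ ‖L‖ * r := mul_le_mul_of_nonneg_left hur (norm_nonneg L)
    have hp1 := le_abs_self (P 0)
    have hp2 := neg_abs_le (P 0)
    rw [abs_le]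
    constructor <;> linarith
  -- odd bound on P
  have hPodd : ∀ u ∈ closedBall (0:EuclideanSpace ℝ (Fin d)) r,
      |P u - P (-u)| ≤ (2*C₂*r + 2*‖L‖) * ‖u‖ := by
    intro u hu
    have h1 := hPq u (hsub₂ hu)
    have h2 := hPq (-u) (hsub₂ (hnegmem hu))
    rw [norm_neg, map_neg, Real.norm_eq_abs] at h2
    rw [Real.norm_eq_abs] at h1
    have hl := L.le_opNorm u
    rw [Real.norm_eq_abs] at hl
    have hur : ‖u‖ ≤ r := mem_closedBall_zero_iff.1 hu
    have hx1 := abs_le.1 h1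
    have hx2 := abs_le.1 h2
    have hlx := abs_le.1 hl
    have hq : C₂ * ‖u‖^2 ≤ C₂ * r * ‖u‖ := by
      have h5 : ‖u‖^2 ≤ r * ‖u‖ := by
        rw [pow_two]
        exact mul_le_mul_of_nonneg_right hur (norm_nonneg u)
      calc C₂ * ‖u‖^2 ≤ C₂ * (r * ‖u‖) := mul_le_mul_of_nonneg_left h5 hC₂0
        _ = C₂ * r * ‖u‖ := by ring
    rw [abs_le]
    constructor <;> linarith
  -- continuity
  have hφcont : ContinuousOn φ (closedBall (0:EuclideanSpace ℝ (Fin d)) r) :=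
    hφ.continuousOn.mono hrU
  have hPcont : ContinuousOn P (closedBall (0:EuclideanSpace ℝ (Fin d)) r) :=
    hP.continuousOn.mono hrV
  have hnegc : ContinuousOn (fun u : EuclideanSpace ℝ (Fin d) => -u)
      (closedBall (0:EuclideanSpace ℝ (Fin d)) r) := continuous_neg.continuousOn
  have hnegmaps : Set.MapsTo (fun u : EuclideanSpace ℝ (Fin d) => -u)
      (closedBall (0:EuclideanSpace ℝ (Fin d)) r)
      (closedBall (0:EuclideanSpace ℝ (Fin d)) r) := fun u hu => hnegmem hu
  have hPnegcont : ContinuousOn (fun u : EuclideanSpace ℝ (Fin d) => P (-u))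
      (closedBall (0:EuclideanSpace ℝ (Fin d)) r) := hPcont.comp hnegc hnegmaps
  have hφnegcont : ContinuousOn (fun u : EuclideanSpace ℝ (Fin d) => φ (-u))
      (closedBall (0:EuclideanSpace ℝ (Fin d)) r) := hφcont.comp hnegc hnegmaps
  have hφj : ∀ j, ContinuousOn (fun u : EuclideanSpace ℝ (Fin d) => φ u j)
      (closedBall (0:EuclideanSpace ℝ (Fin d)) r) :=
    fun j => (continuous_coord j).comp_continuousOn hφcont
  have hφnj : ∀ j, ContinuousOn (fun u : EuclideanSpace ℝ (Fin d) => φ (-u) j)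
      (closedBall (0:EuclideanSpace ℝ (Fin d)) r) :=
    fun j => (continuous_coord j).comp_continuousOn hφnegcont
  have hIoc : Set.Ioc (0:ℝ) r ∈ 𝓝[>] (0:ℝ) := Ioc_mem_nhdsGT_of_mem (Set.left_mem_Ico.2 hr)
  intro a b
  obtain (i | i) := a <;> obtain (j | j) := b
  · -- tangent-tangent
    simp only [Sum.elim_inl, Matrix.diagonal_apply, Sum.inl.injEq]
    set G : EuclideanSpace ℝ (Fin d) → ℝ :=
      fun u => (u i * u j * P u + u i * u j * P (-u))/2 - u i * u j * P 0 with hG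
    have hGcont : ContinuousOn G (closedBall (0:EuclideanSpace ℝ (Fin d)) r) := by
      refine ContinuousOn.sub (ContinuousOn.div_const ?_ 2) ?_
      · exact ContinuousOn.add
          (((continuous_coord i).continuousOn.mul (continuous_coord j).continuousOn).mul hPcont)
          (((continuous_coord i).continuousOn.mul (continuous_coord j).continuousOn).mul
            hPnegcont)
      · exact ((continuous_coord i).continuousOn.mul
          (continuous_coord j).continuousOn).mul continuousOn_const
    have hGbd : ∀ u ∈ closedBall (0:EuclideanSpace ℝ (Fin d)) r, |G u| ≤ C₂ * ‖u‖^4 := by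
      intro u hu
      have h1 := hPq u (hsub₂ hu)
      have h2 := hPq (-u) (hsub₂ (hnegmem hu))
      rw [norm_neg, map_neg, Real.norm_eq_abs] at h2
      rw [Real.norm_eq_abs] at h1
      have hx1 := abs_le.1 h1
      have hx2 := abs_le.1 h2
      have key : |(P u + P (-u))/2 - P 0| ≤ C₂ * ‖u‖^2 := by
        rw [abs_le]
        constructor <;> linarith
      calc |G u| = |u i| * |u j| * |(P u + P (-u))/2 - P 0| := by
            rw [show G u = u i * u j * ((P u + P (-u))/2 - P 0) by rw [hG]; ring,
              abs_mul, abs_mul]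
        _ ≤ ‖u‖ * ‖u‖ * (C₂ * ‖u‖^2) := by
            refine mul_le_mul (mul_le_mul (coord_abs_le_norm u i) (coord_abs_le_norm u j)
              (abs_nonneg _) (norm_nonneg _)) key (abs_nonneg _) ?_
            positivity
        _ = C₂ * ‖u‖^4 := by ring
    have hbig := integral_bigO_of_quartic_bound hr hC₂0
      (hGcont.integrableOn_compact (isCompact_closedBall _ _)) hGbd
    refine hbig.congr' ?_ (Filter.EventuallyEq.refl _ _)
    filter_upwards [hIoc] with h hh
    obtain ⟨h0, hhr⟩ := hh
    have hsub : closedBall (0:EuclideanSpace ℝ (Fin d)) h ⊆ closedBall 0 r :=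
      closedBall_subset_closedBall hhr
    have hA : IntegrableOn (fun u : EuclideanSpace ℝ (Fin d) => u i * u j * P u)
        (closedBall (0:EuclideanSpace ℝ (Fin d)) h) volume :=
      (((((continuous_coord i).continuousOn.mul (continuous_coord j).continuousOn).mul
        hPcont)).mono hsub).integrableOn_compact (isCompact_closedBall _ _)
    have hB : IntegrableOn (fun u : EuclideanSpace ℝ (Fin d) => u i * u j * P (-u))
        (closedBall (0:EuclideanSpace ℝ (Fin d)) h) volume :=
      (((((continuous_coord i).continuousOn.mul (continuous_coord j).continuousOn).mul
        hPnegcont)).mono hsub).integrableOn_compact (isCompact_closedBall _ _)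
    have hC : IntegrableOn (fun u : EuclideanSpace ℝ (Fin d) => u i * u j * P 0)
        (closedBall (0:EuclideanSpace ℝ (Fin d)) h) volume :=
      (((((continuous_coord i).continuousOn.mul (continuous_coord j).continuousOn).mul
        continuousOn_const)).mono hsub).integrableOn_compact (isCompact_closedBall _ _)
    have hW : (∫ u in closedBall (0:EuclideanSpace ℝ (Fin d)) h, u i * u j * P (-u))
        = ∫ u in closedBall (0:EuclideanSpace ℝ (Fin d)) h, u i * u j * P u := by
      have := setIntegral_ball_neg (fun u => u i * u j * P u) h
      simpa using this
    have hCval : (∫ u in closedBall (0:EuclideanSpace ℝ (Fin d)) h, u i * u j * P 0)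
        = (if i = j then sphereArea d / (d*(d+2)) * h^(d+2) else 0) * P 0 := by
      rw [MeasureTheory.integral_mul_const, moment hd i j h0.le]
    have hsplit : (∫ u in closedBall (0:EuclideanSpace ℝ (Fin d)) h, G u)
        = ((∫ u in closedBall (0:EuclideanSpace ℝ (Fin d)) h, u i * u j * P u)
            + ∫ u in closedBall (0:EuclideanSpace ℝ (Fin d)) h, u i * u j * P (-u))/2
          - ∫ u in closedBall (0:EuclideanSpace ℝ (Fin d)) h, u i * u j * P 0 := by
      rw [hG]
      rw [integral_sub (f := fun u : EuclideanSpace ℝ (Fin d) =>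
          (u i * u j * P u + u i * u j * P (-u))/2)
        (g := fun u : EuclideanSpace ℝ (Fin d) => u i * u j * P 0)
        ((hA.add hB).div_const 2) hC, integral_div, integral_add hA hB]
    rw [hsplit, hW, hCval]
    by_cases hij : i = j
    · simp only [if_pos hij]
      ring
    · simp only [if_neg hij]
      ring
  · -- tangent-normal
    simp only [Sum.elim_inl, Sum.elim_inr, Matrix.diagonal_apply, reduceCtorEq, if_false,
      mul_zero, sub_zero]
    set CG : ℝ := (C₃ * MP + C₁ * (2*C₂*r + 2*‖L‖))/2 with hCG
    have hCG0 : 0 ≤ CG := by positivity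
    set G : EuclideanSpace ℝ (Fin d) → ℝ :=
      fun u => (u i * φ u j * P u - u i * φ (-u) j * P (-u))/2 with hG
    have hGcont : ContinuousOn G (closedBall (0:EuclideanSpace ℝ (Fin d)) r) := by
      refine ContinuousOn.div_const (ContinuousOn.sub ?_ ?_) 2
      · exact ((continuous_coord i).continuousOn.mul (hφj j)).mul hPcont
      · exact ((continuous_coord i).continuousOn.mul (hφnj j)).mul hPnegcont
    have hGbd : ∀ u ∈ closedBall (0:EuclideanSpace ℝ (Fin d)) r, |G u| ≤ CG * ‖u‖^4 := by
      intro u hu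
      have hur : ‖u‖ ≤ r := mem_closedBall_zero_iff.1 hu
      have hφd : |φ u j - φ (-u) j| ≤ C₃ * ‖u‖^3 := by
        have h1 : |(φ u - φ (-u)) j| ≤ ‖φ u - φ (-u)‖ := coord_abs_le_norm _ j
        simp only [PiLp.sub_apply] at h1
        exact h1.trans (hφodd u (hsub₃ hu))
      have hφn : |φ (-u) j| ≤ C₁ * ‖u‖^2 := by
        have h1 : |φ (-u) j| ≤ ‖φ (-u)‖ := coord_abs_le_norm _ j
        refine h1.trans ?_
        have := hφq (-u) (hsub₁ (hnegmem hu))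
        rwa [norm_neg] at this
      have hPu : |P u| ≤ MP := hPbd u hu
      have hPd : |P u - P (-u)| ≤ (2*C₂*r + 2*‖L‖) * ‖u‖ := hPodd u hu
      have hD : |φ u j * P u - φ (-u) j * P (-u)|
          ≤ (C₃ * MP + C₁ * (2*C₂*r + 2*‖L‖)) * ‖u‖^3 := by
        have e : φ u j * P u - φ (-u) j * P (-u)
            = (φ u j - φ (-u) j) * P u + φ (-u) j * (P u - P (-u)) := by ring
        rw [e]
        calc |(φ u j - φ (-u) j) * P u + φ (-u) j * (P u - P (-u))|
            ≤ |(φ u j - φ (-u) j) * P u| + |φ (-u) j * (P u - P (-u))| := abs_add_le _ _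
          _ = |φ u j - φ (-u) j| * |P u| + |φ (-u) j| * |P u - P (-u)| := by
              rw [abs_mul, abs_mul]
          _ ≤ (C₃ * ‖u‖^3) * MP + (C₁ * ‖u‖^2) * ((2*C₂*r + 2*‖L‖) * ‖u‖) := by
              refine add_le_add (mul_le_mul hφd hPu (abs_nonneg _) (by positivity))
                (mul_le_mul hφn hPd (abs_nonneg _) (by positivity))
          _ = (C₃ * MP + C₁ * (2*C₂*r + 2*‖L‖)) * ‖u‖^3 := by ring
      calc |G u| = |u i| * |φ u j * P u - φ (-u) j * P (-u)| / 2 := by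
            rw [show G u = u i * (φ u j * P u - φ (-u) j * P (-u)) / 2 by rw [hG]; ring,
              abs_div, abs_mul]
            norm_num
        _ ≤ ‖u‖ * ((C₃ * MP + C₁ * (2*C₂*r + 2*‖L‖)) * ‖u‖^3) / 2 := by
            exact div_le_div_of_nonneg_right
              (mul_le_mul (coord_abs_le_norm u i) hD (abs_nonneg _) (norm_nonneg u))
              (by norm_num)
        _ = CG * ‖u‖^4 := by rw [hCG]; ring
    have hbig := integral_bigO_of_quartic_bound hr hCG0
      (hGcont.integrableOn_compact (isCompact_closedBall _ _)) hGbd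
    refine hbig.congr' ?_ (Filter.EventuallyEq.refl _ _)
    filter_upwards [hIoc] with h hh
    obtain ⟨h0, hhr⟩ := hh
    have hsub : closedBall (0:EuclideanSpace ℝ (Fin d)) h ⊆ closedBall 0 r :=
      closedBall_subset_closedBall hhr
    have hA : IntegrableOn (fun u : EuclideanSpace ℝ (Fin d) => u i * φ u j * P u)
        (closedBall (0:EuclideanSpace ℝ (Fin d)) h) volume :=
      ((((continuous_coord i).continuousOn.mul (hφj j)).mul hPcont).mono
        hsub).integrableOn_compact (isCompact_closedBall _ _)
    have hB : IntegrableOn (fun u : EuclideanSpace ℝ (Fin d) => u i * φ (-u) j * P (-u))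
        (closedBall (0:EuclideanSpace ℝ (Fin d)) h) volume :=
      ((((continuous_coord i).continuousOn.mul (hφnj j)).mul hPnegcont).mono
        hsub).integrableOn_compact (isCompact_closedBall _ _)
    have hW : (∫ u in closedBall (0:EuclideanSpace ℝ (Fin d)) h, u i * φ (-u) j * P (-u))
        = - ∫ u in closedBall (0:EuclideanSpace ℝ (Fin d)) h, u i * φ u j * P u := by
      have := setIntegral_ball_neg (fun u => u i * φ u j * P u) h
      simp only [PiLp.neg_apply, neg_mul] at this
      rw [integral_neg] at this
      linarith
    have hsplit : (∫ u in closedBall (0:EuclideanSpace ℝ (Fin d)) h, G u)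
        = ((∫ u in closedBall (0:EuclideanSpace ℝ (Fin d)) h, u i * φ u j * P u)
            - ∫ u in closedBall (0:EuclideanSpace ℝ (Fin d)) h, u i * φ (-u) j * P (-u))/2 := by
      rw [hG]
      rw [show (fun u : EuclideanSpace ℝ (Fin d) =>
          (u i * φ u j * P u - u i * φ (-u) j * P (-u))/2)
        = fun u => (u i * φ u j * P u - u i * φ (-u) j * P (-u))/2 from rfl]
      rw [← integral_sub hA hB, integral_div]
    rw [hsplit, hW]
    ring
  · -- normal-tangent
    simp only [Sum.elim_inl, Sum.elim_inr, Matrix.diagonal_apply, reduceCtorEq, if_false,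
      mul_zero, sub_zero]
    set CG : ℝ := (C₃ * MP + C₁ * (2*C₂*r + 2*‖L‖))/2 with hCG
    have hCG0 : 0 ≤ CG := by positivity
    set G : EuclideanSpace ℝ (Fin d) → ℝ :=
      fun u => (φ u i * u j * P u - φ (-u) i * u j * P (-u))/2 with hG
    have hGcont : ContinuousOn G (closedBall (0:EuclideanSpace ℝ (Fin d)) r) := by
      refine ContinuousOn.div_const (ContinuousOn.sub ?_ ?_) 2
      · exact ((hφj i).mul (continuous_coord j).continuousOn).mul hPcont
      · exact ((hφnj i).mul (continuous_coord j).continuousOn).mul hPnegcont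
    have hGbd : ∀ u ∈ closedBall (0:EuclideanSpace ℝ (Fin d)) r, |G u| ≤ CG * ‖u‖^4 := by
      intro u hu
      have hur : ‖u‖ ≤ r := mem_closedBall_zero_iff.1 hu
      have hφd : |φ u i - φ (-u) i| ≤ C₃ * ‖u‖^3 := by
        have h1 : |(φ u - φ (-u)) i| ≤ ‖φ u - φ (-u)‖ := coord_abs_le_norm _ i
        simp only [PiLp.sub_apply] at h1
        exact h1.trans (hφodd u (hsub₃ hu))
      have hφn : |φ (-u) i| ≤ C₁ * ‖u‖^2 := by
        have h1 : |φ (-u) i| ≤ ‖φ (-u)‖ := coord_abs_le_norm _ i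
        refine h1.trans ?_
        have := hφq (-u) (hsub₁ (hnegmem hu))
        rwa [norm_neg] at this
      have hPu : |P u| ≤ MP := hPbd u hu
      have hPd : |P u - P (-u)| ≤ (2*C₂*r + 2*‖L‖) * ‖u‖ := hPodd u hu
      have hD : |φ u i * P u - φ (-u) i * P (-u)|
          ≤ (C₃ * MP + C₁ * (2*C₂*r + 2*‖L‖)) * ‖u‖^3 := by
        have e : φ u i * P u - φ (-u) i * P (-u)
            = (φ u i - φ (-u) i) * P u + φ (-u) i * (P u - P (-u)) := by ring
        rw [e]
        calc |(φ u i - φ (-u) i) * P u + φ (-u) i * (P u - P (-u))|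
            ≤ |(φ u i - φ (-u) i) * P u| + |φ (-u) i * (P u - P (-u))| := abs_add_le _ _
          _ = |φ u i - φ (-u) i| * |P u| + |φ (-u) i| * |P u - P (-u)| := by
              rw [abs_mul, abs_mul]
          _ ≤ (C₃ * ‖u‖^3) * MP + (C₁ * ‖u‖^2) * ((2*C₂*r + 2*‖L‖) * ‖u‖) := by
              refine add_le_add (mul_le_mul hφd hPu (abs_nonneg _) (by positivity))
                (mul_le_mul hφn hPd (abs_nonneg _) (by positivity))
          _ = (C₃ * MP + C₁ * (2*C₂*r + 2*‖L‖)) * ‖u‖^3 := by ring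
      calc |G u| = |u j| * |φ u i * P u - φ (-u) i * P (-u)| / 2 := by
            rw [show G u = u j * (φ u i * P u - φ (-u) i * P (-u)) / 2 by rw [hG]; ring,
              abs_div, abs_mul]
            norm_num
        _ ≤ ‖u‖ * ((C₃ * MP + C₁ * (2*C₂*r + 2*‖L‖)) * ‖u‖^3) / 2 := by
            exact div_le_div_of_nonneg_right
              (mul_le_mul (coord_abs_le_norm u j) hD (abs_nonneg _) (norm_nonneg u))
              (by norm_num)
        _ = CG * ‖u‖^4 := by rw [hCG]; ring
    have hbig := integral_bigO_of_quartic_bound hr hCG0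
      (hGcont.integrableOn_compact (isCompact_closedBall _ _)) hGbd
    refine hbig.congr' ?_ (Filter.EventuallyEq.refl _ _)
    filter_upwards [hIoc] with h hh
    obtain ⟨h0, hhr⟩ := hh
    have hsub : closedBall (0:EuclideanSpace ℝ (Fin d)) h ⊆ closedBall 0 r :=
      closedBall_subset_closedBall hhr
    have hA : IntegrableOn (fun u : EuclideanSpace ℝ (Fin d) => φ u i * u j * P u)
        (closedBall (0:EuclideanSpace ℝ (Fin d)) h) volume :=
      ((((hφj i).mul (continuous_coord j).continuousOn).mul hPcont).mono
        hsub).integrableOn_compact (isCompact_closedBall _ _)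
    have hB : IntegrableOn (fun u : EuclideanSpace ℝ (Fin d) => φ (-u) i * u j * P (-u))
        (closedBall (0:EuclideanSpace ℝ (Fin d)) h) volume :=
      ((((hφnj i).mul (continuous_coord j).continuousOn).mul hPnegcont).mono
        hsub).integrableOn_compact (isCompact_closedBall _ _)
    have hW : (∫ u in closedBall (0:EuclideanSpace ℝ (Fin d)) h, φ (-u) i * u j * P (-u))
        = - ∫ u in closedBall (0:EuclideanSpace ℝ (Fin d)) h, φ u i * u j * P u := by
      have := setIntegral_ball_neg (fun u => φ u i * u j * P u) h
      simp only [PiLp.neg_apply, mul_neg, neg_mul] at this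
      rw [integral_neg] at this
      linarith
    have hsplit : (∫ u in closedBall (0:EuclideanSpace ℝ (Fin d)) h, G u)
        = ((∫ u in closedBall (0:EuclideanSpace ℝ (Fin d)) h, φ u i * u j * P u)
            - ∫ u in closedBall (0:EuclideanSpace ℝ (Fin d)) h, φ (-u) i * u j * P (-u))/2 := by
      rw [hG, ← integral_sub hA hB, integral_div]
    rw [hsplit, hW]
    ring
  · -- normal-normal
    simp only [Sum.elim_inr, Matrix.diagonal_apply, Sum.inr.injEq, ite_self, mul_zero, sub_zero]
    set CG : ℝ := C₁ * C₁ * MP with hCG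
    have hCG0 : 0 ≤ CG := by positivity
    have hGcont : ContinuousOn (fun u : EuclideanSpace ℝ (Fin d) => φ u i * φ u j * P u)
        (closedBall (0:EuclideanSpace ℝ (Fin d)) r) := ((hφj i).mul (hφj j)).mul hPcont
    have hGbd : ∀ u ∈ closedBall (0:EuclideanSpace ℝ (Fin d)) r,
        |φ u i * φ u j * P u| ≤ CG * ‖u‖^4 := by
      intro u hu
      have hi : |φ u i| ≤ C₁ * ‖u‖^2 := (coord_abs_le_norm _ i).trans (hφq u (hsub₁ hu))
      have hj : |φ u j| ≤ C₁ * ‖u‖^2 := (coord_abs_le_norm _ j).trans (hφq u (hsub₁ hu))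
      have hPu : |P u| ≤ MP := hPbd u hu
      calc |φ u i * φ u j * P u| = |φ u i| * |φ u j| * |P u| := by rw [abs_mul, abs_mul]
        _ ≤ (C₁ * ‖u‖^2) * (C₁ * ‖u‖^2) * MP := by
            refine mul_le_mul (mul_le_mul hi hj (abs_nonneg _) (by positivity)) hPu
              (abs_nonneg _) (by positivity)
        _ = CG * ‖u‖^4 := by rw [hCG]; ring
    exact integral_bigO_of_quartic_bound hr hCG0
      (hGcont.integrableOn_compact (isCompact_closedBall _ _)) hGbd
end
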